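/- With the topology control algorithm of Algorithm 1, the total number of edges satisfies |A| ≤ 5n. -/

import Mathlib

noncomputable section

/-- The Gilbert graph on vertex set `Fin n`: `i ≠ j` are adjacent iff `dist (x i) (x j) ≤ R`. -/
def gilbert (n : ℕ) (x : Fin n → EuclideanSpace ℝ (Fin 2)) (R : ℝ) : SimpleGraph (Fin n) where
  Adj i j := i ≠ j ∧ dist (x i) (x j) ≤ R
  symm := by
    constructor
    intro i j h
    exact ⟨h.1.symm, by rw [dist_comm]; exact h.2⟩
  loopless := ⟨by intro i h; exact h.1 rfl⟩

/-- The lesser neighborhood `N_i = {j < i : dist (x i) (x j) ≤ R}`. -/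
def lesserN (n : ℕ) (x : Fin n → EuclideanSpace ℝ (Fin 2)) (R : ℝ) (i : Fin n) : Set (Fin n) :=
  {j | j < i ∧ dist (x i) (x j) ≤ R}

/-- Vertex `i` initiates a connection to `j` iff `j` is the maximum-index vertex of its
connected component in the Gilbert graph induced on the lesser neighborhood `N_i`. -/
def initiates (n : ℕ) (x : Fin n → EuclideanSpace ℝ (Fin 2)) (R : ℝ) (i j : Fin n) : Prop :=
  ∃ hj : j ∈ lesserN n x R i,
    ∀ k, ∀ hk : k ∈ lesserN n x R i,
      ((gilbert n x R).induce (lesserN n x R i)).Reachable ⟨j, hj⟩ ⟨k, hk⟩ → k ≤ j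

/-- The topology produced by Algorithm 1: the symmetrization of the initiated connections. -/
def Agraph (n : ℕ) (x : Fin n → EuclideanSpace ℝ (Fin 2)) (R : ℝ) : SimpleGraph (Fin n) where
  Adj i j := initiates n x R i j ∨ initiates n x R j i
  symm := ⟨fun i j h => Or.symm h⟩
  loopless := by
    constructor
    intro i h
    rcases h with ⟨hj, _⟩ | ⟨hj, _⟩ <;> exact absurd hj.1 (lt_irrefl i)

open Real

/-! ### Auxiliary geometric lemmas -/

lemma key_cos (z w : ℂ) (R : ℝ) (hz : ‖z‖ ≤ R) (hw : ‖w‖ ≤ R)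
    (hc : (1:ℝ)/2 ≤ Real.cos (z.arg - w.arg)) : ‖z - w‖ ≤ R := by
  have h1 := Complex.norm_mul_cos_arg z
  have h2 := Complex.norm_mul_sin_arg z
  have h3 := Complex.norm_mul_cos_arg w
  have h4 := Complex.norm_mul_sin_arg w
  have hC := Real.cos_sub z.arg w.arg
  have hcz := Real.sin_sq_add_cos_sq z.arg
  have hcw := Real.sin_sq_add_cos_sq w.arg
  have haz : 0 ≤ ‖z‖ := norm_nonneg z
  have haw : 0 ≤ ‖w‖ := norm_nonneg w
  have hR : 0 ≤ R := le_trans haz hz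
  have hsq : (‖z - w‖)^2 = (z.re - w.re)^2 + (z.im - w.im)^2 := by
    rw [Complex.sq_norm, Complex.normSq_apply]
    simp [Complex.sub_re, Complex.sub_im]; ring
  have hd : (‖z - w‖)^2 = (‖z‖)^2 + (‖w‖)^2
      - 2 * (‖z‖) * (‖w‖) * Real.cos (z.arg - w.arg) := by
    rw [hsq, ← h1, ← h2, ← h3, ← h4, hC]; nlinarith [hcz, hcw]
  have hnn : 0 ≤ ‖z - w‖ := norm_nonneg _
  nlinarith [mul_nonneg haz haw, mul_nonneg (sub_nonneg.2 hz) (sub_nonneg.2 hw),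
    mul_nonneg (mul_nonneg haz haw) (by linarith : (0:ℝ) ≤ Real.cos (z.arg - w.arg) - 1/2)]

lemma cosHalfLem (d : ℝ) (h : |d| ≤ π/3) : 1/2 ≤ Real.cos d := by
  rw [← Real.cos_abs, ← Real.cos_pi_div_three]
  exact Real.cos_le_cos_of_nonneg_of_le_pi (abs_nonneg _)
    (by linarith [Real.pi_pos]) h

lemma six_angles (A : Finset ℝ) (hA : A.card = 6) (hb : ∀ a ∈ A, -π < a ∧ a ≤ π) :
    ∃ a ∈ A, ∃ b ∈ A, a ≠ b ∧ 1/2 ≤ Real.cos (a - b) := by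
  by_contra hcon
  push_neg at hcon
  have hpi := Real.pi_pos
  set l := A.sort (· ≤ ·) with hldef
  have hlen : l.length = 6 := by rw [hldef, Finset.length_sort, hA]
  have hs : l.Pairwise (· < ·) := A.sortedLT_sort.pairwise
  obtain ⟨a0, a1, a2, a3, a4, a5, hl⟩ :
      ∃ a0 a1 a2 a3 a4 a5, l = [a0, a1, a2, a3, a4, a5] := by
    rcases l with _ | ⟨a0, _ | ⟨a1, _ | ⟨a2, _ | ⟨a3, _ | ⟨a4, _ | ⟨a5, _ | ⟨a6, t⟩⟩⟩⟩⟩⟩⟩ <;>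
      simp only [List.length] at hlen <;>
      first
        | omega
        | exact ⟨a0, a1, a2, a3, a4, a5, rfl⟩
  have hmem : ∀ a ∈ l, a ∈ A := fun a ha => (Finset.mem_sort _).mp ha
  rw [hl] at hs hmem
  simp only [List.pairwise_cons, List.mem_cons, List.not_mem_nil, or_false,
    List.mem_singleton] at hs
  have m0 : a0 ∈ A := hmem a0 (by simp)
  have m1 : a1 ∈ A := hmem a1 (by simp)
  have m2 : a2 ∈ A := hmem a2 (by simp)
  have m3 : a3 ∈ A := hmem a3 (by simp)
  have m4 : a4 ∈ A := hmem a4 (by simp)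
  have m5 : a5 ∈ A := hmem a5 (by simp)
  have gap : ∀ a ∈ A, ∀ b ∈ A, a < b → π/3 < b - a := by
    intro a ha b hb hab
    by_contra hle
    push_neg at hle
    have : 1/2 ≤ Real.cos (b - a) :=
      cosHalfLem _ (by rw [abs_of_nonneg (by linarith)]; linarith)
    exact absurd this (not_le.mpr (hcon b hb a ha (ne_of_gt hab)))
  have g01 := gap a0 m0 a1 m1 (by tauto)
  have g12 := gap a1 m1 a2 m2 (by tauto)
  have g23 := gap a2 m2 a3 m3 (by tauto)
  have g34 := gap a3 m3 a4 m4 (by tauto)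
  have g45 := gap a4 m4 a5 m5 (by tauto)
  have h0 := hb a0 m0
  have h5 := hb a5 m5
  have hw : 1/2 ≤ Real.cos (a0 - a5 + 2*π) := by
    apply cosHalfLem
    rw [abs_of_nonneg (by linarith)]
    linarith
  rw [Real.cos_add_two_pi] at hw
  have hne : a0 ≠ a5 := by intro h; linarith
  exact absurd hw (not_le.mpr (hcon a0 m0 a5 m5 hne))

lemma packingC {ι : Type*} (s : Finset ι) (p : ι → ℂ) (R : ℝ)
    (h1 : ∀ j ∈ s, ‖p j‖ ≤ R)
    (h2 : ∀ j ∈ s, ∀ k ∈ s, j ≠ k → R < ‖p j - p k‖) : s.card ≤ 5 := by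
  by_contra hcard
  push_neg at hcard
  obtain ⟨t, hts, ht6⟩ := Finset.exists_subset_card_eq (by omega : 6 ≤ s.card)
  have hpair : ∃ j ∈ t, ∃ k ∈ t, j ≠ k ∧ 1/2 ≤ Real.cos ((p j).arg - (p k).arg) := by
    by_cases hinj : Set.InjOn (fun j => (p j).arg) ↑t
    · have hA : (t.image fun j => (p j).arg).card = 6 := by
        rw [Finset.card_image_of_injOn hinj, ht6]
      obtain ⟨a, ha, b, hb, hab, hcos⟩ := six_angles _ hA
        (by
          intro a ha
          obtain ⟨j, _, rfl⟩ := Finset.mem_image.mp ha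
          exact ⟨Complex.neg_pi_lt_arg _, Complex.arg_le_pi _⟩)
      obtain ⟨j, hj, rfl⟩ := Finset.mem_image.mp ha
      obtain ⟨k, hk, rfl⟩ := Finset.mem_image.mp hb
      exact ⟨j, hj, k, hk, fun h => hab (by rw [h]), hcos⟩
    · rw [Set.InjOn] at hinj
      push_neg at hinj
      obtain ⟨j, hj, k, hk, heq, hne⟩ := hinj
      exact ⟨j, by simpa using hj, k, by simpa using hk, hne,
        by rw [heq]; norm_num⟩
  obtain ⟨j, hj, k, hk, hjk, hcos⟩ := hpair
  have := key_cos (p j) (p k) R (h1 j (hts hj)) (h1 k (hts hk)) hcos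
  exact absurd this (not_le.mpr (h2 j (hts hj) k (hts hk) hjk))

lemma distC (a b : EuclideanSpace ℝ (Fin 2)) :
    dist a b = ‖(⟨a 0 - b 0, a 1 - b 1⟩ : ℂ)‖ := by
  rw [EuclideanSpace.dist_eq, Complex.norm_def, Complex.normSq_apply]
  simp only [Fin.sum_univ_two, Real.dist_eq, sq_abs]
  norm_num [pow_two]

lemma packingE {ι : Type*} (s : Finset ι) (q : ι → EuclideanSpace ℝ (Fin 2))
    (c : EuclideanSpace ℝ (Fin 2)) (R : ℝ)
    (h1 : ∀ j ∈ s, dist c (q j) ≤ R)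
    (h2 : ∀ j ∈ s, ∀ k ∈ s, j ≠ k → R < dist (q j) (q k)) : s.card ≤ 5 := by
  apply packingC s (fun j => (⟨q j 0 - c 0, q j 1 - c 1⟩ : ℂ)) R
  · intro j hj
    have := h1 j hj
    rw [dist_comm, distC] at this
    exact this
  · intro j hj k hk hjk
    have hsub : ((⟨q j 0 - c 0, q j 1 - c 1⟩ : ℂ) - (⟨q k 0 - c 0, q k 1 - c 1⟩ : ℂ))
        = (⟨q j 0 - q k 0, q j 1 - q k 1⟩ : ℂ) := by
      apply Complex.ext <;> simp
    rw [hsub, ← distC]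
    exact h2 j hj k hk hjk

/-- The topology generated by Algorithm 1 has at most `5 * n` edges. -/
theorem Agraph_edges_le_five_n
    (n : ℕ) (x : Fin n → EuclideanSpace ℝ (Fin 2)) (R : ℝ) (hR : 0 < R) :
    (Agraph n x R).edgeSet.ncard ≤ 5 * n := by
  classical
  -- the set of initiated ordered pairs
  set P : Finset (Fin n × Fin n) :=
    Finset.univ.filter (fun p => initiates n x R p.1 p.2) with hP
  -- each vertex initiates at most 5 edges
  have hfive : ∀ i : Fin n,
      (Finset.univ.filter (fun j => initiates n x R i j)).card ≤ 5 := by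
    intro i
    apply packingE _ x (x i) R
    · intro j hj
      obtain ⟨⟨_, hd⟩, _⟩ := (Finset.mem_filter.mp hj).2
      exact hd
    · intro j hj k hk hjk
      obtain ⟨hjN, hjmax⟩ := (Finset.mem_filter.mp hj).2
      obtain ⟨hkN, hkmax⟩ := (Finset.mem_filter.mp hk).2
      by_contra hle
      push_neg at hle
      have hadj : ((gilbert n x R).induce (lesserN n x R i)).Adj ⟨j, hjN⟩ ⟨k, hkN⟩ := by
        refine ⟨hjk, hle⟩
      have h1 := hjmax k hkN hadj.reachable
      have h2 := hkmax j hjN hadj.symm.reachable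
      exact hjk (le_antisymm h2 h1)
  -- the edge set is covered by the images of initiated pairs
  have hsub : (Agraph n x R).edgeSet ⊆ Sym2.mk.uncurry '' (↑P : Set (Fin n × Fin n)) := by
    intro e he
    induction e using Sym2.ind with
    | _ i j =>
      rw [SimpleGraph.mem_edgeSet] at he
      rcases he with h | h
      · exact ⟨(i, j), by simp [hP, h], rfl⟩
      · exact ⟨(j, i), by simp [hP, h], Sym2.eq_swap⟩
  have hfin : (Sym2.mk.uncurry '' (↑P : Set (Fin n × Fin n))).Finite :=
    (P.finite_toSet).image _
  calc (Agraph n x R).edgeSet.ncard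
      ≤ (Sym2.mk.uncurry '' (↑P : Set (Fin n × Fin n))).ncard := Set.ncard_le_ncard hsub hfin
    _ ≤ (↑P : Set (Fin n × Fin n)).ncard := Set.ncard_image_le P.finite_toSet
    _ = P.card := Set.ncard_coe_finset P
    _ = ∑ i : Fin n, (P.filter (fun p => p.1 = i)).card :=
        Finset.card_eq_sum_card_fiberwise (fun p _ => Finset.mem_univ p.1)
    _ ≤ ∑ i : Fin n, 5 := by
        apply Finset.sum_le_sum
        intro i _
        refine le_trans (Finset.card_le_card_of_injOn Prod.snd ?_ ?_) (hfive i)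
        · intro p hp
          obtain ⟨hp1, hp2⟩ := Finset.mem_filter.mp hp
          obtain ⟨_, hinit⟩ := Finset.mem_filter.mp hp1
          rw [Finset.mem_coe, Finset.mem_filter]
          exact ⟨Finset.mem_univ _, hp2 ▸ hinit⟩
        · intro p hp q hq hpq
          obtain ⟨_, hp2⟩ := Finset.mem_filter.mp (Finset.mem_coe.mp hp)
          obtain ⟨_, hq2⟩ := Finset.mem_filter.mp (Finset.mem_coe.mp hq)
          exact Prod.ext (hp2.trans hq2.symm) hpq
    _ = 5 * n := by simp [Finset.card_univ, mul_comm]
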